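/- arXiv:2110.05405 — 6 statements merged into one kernel-verified Lean document; each statement's English description precedes it below -/
import Mathlib

section
/- If a finite simple graph G is word-representable, then there exists a uniform word representing G (i.e., a word representing G in which every vertex occurs the same number of times). -/
namespace WordRepr

variable {V : Type*}

/-- Two letters `x` and `y` alternate in a word `w` if in the subsequence of `w`
formed by all occurrences of `x` and `y`, no two consecutive letters are equal. -/
def Alternates [DecidableEq V] (w : List V) (x y : V) : Prop :=
  List.Chain' (· ≠ ·) (w.filter fun z => decide (z = x ∨ z = y))

/-- A word `w` represents the graph `G` if every vertex occurs in `w`, and two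
distinct vertices alternate in `w` iff they are adjacent in `G`. -/
def Represents [DecidableEq V] (G : SimpleGraph V) (w : List V) : Prop :=
  (∀ v : V, v ∈ w) ∧ ∀ x y : V, x ≠ y → (Alternates w x y ↔ G.Adj x y)

/-- A graph is word-representable if some word represents it. -/
def WordRepresentable [DecidableEq V] (G : SimpleGraph V) : Prop :=
  ∃ w : List V, Represents G w

/-- A word is uniform if every letter occurring in it occurs the same number of times. -/
def Uniform [DecidableEq V] (w : List V) : Prop :=
  ∀ x y : V, x ∈ w → y ∈ w → w.count x = w.count y

/-- `o` is an orientation of `G`: every oriented pair is an edge, and every edge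
gets exactly one of its two directions. -/
def IsOrientationOf (G : SimpleGraph V) (o : V → V → Prop) : Prop :=
  (∀ x y : V, o x y → G.Adj x y) ∧ ∀ x y : V, G.Adj x y → (o x y ↔ ¬ o y x)

/-- A relation is acyclic if it has no directed cycle. -/
def Acyclic (o : V → V → Prop) : Prop :=
  ∀ v : V, ¬ Relation.TransGen o v v

/-- An orientation of `G` is semi-transitive if it is acyclic and for every
directed path `p 0 → p 1 → ⋯ → p k` whose endpoints are adjacent in `G`,
all the edges `p i → p j` (`i < j`) are present and oriented forwards. -/
def SemiTransitive (G : SimpleGraph V) (o : V → V → Prop) : Prop :=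
  IsOrientationOf G o ∧ Acyclic o ∧
    ∀ (k : ℕ) (p : Fin (k + 1) → V),
      (∀ i : Fin k, o (p i.castSucc) (p i.succ)) →
      G.Adj (p 0) (p (Fin.last k)) →
      ∀ i j : Fin (k + 1), i < j → o (p i) (p j)

/-- The alternating word `x y x y …` of length `n`. -/
private def alt (x y : V) : ℕ → List V
  | 0 => []
  | n + 1 => x :: alt y x n

private lemma alt_length (x y : V) (n : ℕ) : (alt x y n).length = n := by
  induction n generalizing x y with
  | zero => rfl
  | succ n ih => simp [alt, ih]

private lemma alt_append (x y : V) (m n : ℕ) :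
    alt x y (m + n) = alt x y m ++ (if m % 2 = 0 then alt x y n else alt y x n) := by
  induction m generalizing x y with
  | zero => simp [alt]
  | succ m ih =>
    have h1 : m + 1 + n = (m + n) + 1 := by omega
    rw [h1]
    show x :: alt y x (m + n) = (x :: alt y x m) ++ _
    rw [ih y x]
    by_cases hm : m % 2 = 0
    · have hm1 : ¬ ((m + 1) % 2 = 0) := by omega
      simp [hm, hm1]
    · have hm1 : (m + 1) % 2 = 0 := by omega
      simp [hm, hm1]

private lemma chain'_alt {x y : V} (h : x ≠ y) (n : ℕ) :
    List.Chain' (· ≠ ·) (alt x y n) := by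
  induction n generalizing x y with
  | zero => simp [alt]; exact List.isChain_nil
  | succ n ih =>
    show List.Chain' (· ≠ ·) (x :: alt y x n)
    rw [List.Chain', List.isChain_cons]
    refine ⟨?_, ih h.symm⟩
    intro z hz
    cases n with
    | zero => simp [alt] at hz
    | succ m =>
      have hz' : y = z := by
        have e : alt y x (m + 1) = y :: alt x y m := rfl
        rw [e] at hz; simp at hz; exact hz
      exact hz' ▸ h

private lemma count_alt [DecidableEq V] {x y : V} (h : x ≠ y) (n : ℕ) :
    (alt x y n).count x = (n + 1) / 2 ∧ (alt x y n).count y = n / 2 := by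
  induction n generalizing x y with
  | zero => simp [alt]
  | succ n ih =>
    obtain ⟨ih1, ih2⟩ := ih h.symm
    constructor
    · show (x :: alt y x n).count x = _
      rw [List.count_cons_self, ih2]; omega
    · show (x :: alt y x n).count y = _
      rw [List.count_cons_of_ne h, ih1]

private lemma mem_alt_one {x y : V} (n : ℕ) : x ∈ alt x y (n + 1) := by
  show x ∈ x :: alt y x n; simp

private lemma mem_alt_two {x y : V} (n : ℕ) : y ∈ alt x y (n + 2) := by
  show y ∈ x :: y :: alt x y n; simp

private lemma dedup_alt [DecidableEq V] {x y : V} (h : x ≠ y) :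
    ∀ n : ℕ, 2 ≤ n → (alt x y n).dedup = if n % 2 = 0 then [x, y] else [y, x] := by
  intro n
  induction n using Nat.strong_induction_on with
  | _ n ih =>
    intro hn
    match n, hn with
    | 2, _ =>
      show (x :: y :: ([] : List V)).dedup = _
      rw [List.dedup_cons_of_notMem (by simp [h]), List.dedup_cons_of_notMem (by simp)]
      simp
    | 3, _ =>
      show (x :: y :: x :: ([] : List V)).dedup = _
      rw [List.dedup_cons_of_mem (by simp), List.dedup_cons_of_notMem (by simp [h.symm]),
        List.dedup_cons_of_notMem (by simp)]
      simp
    | (m + 4), _ =>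
      have e : alt x y (m + 4) = x :: y :: alt x y (m + 2) := rfl
      rw [e, List.dedup_cons_of_mem (by exact List.mem_cons_of_mem _ (mem_alt_one _)),
        List.dedup_cons_of_mem (mem_alt_two _), ih (m + 2) (by omega) (by omega)]
      have : (m + 4) % 2 = (m + 2) % 2 := by omega
      rw [this]

private lemma dedup_filter [DecidableEq V] (p : V → Bool) (l : List V) :
    (l.filter p).dedup = l.dedup.filter p := by
  induction l with
  | nil => rfl
  | cons a l ih =>
    by_cases hp : p a
    · rw [List.filter_cons_of_pos hp]
      by_cases ha : a ∈ l
      · rw [List.dedup_cons_of_mem (List.mem_filter.2 ⟨ha, hp⟩),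
          List.dedup_cons_of_mem ha, ih]
      · rw [List.dedup_cons_of_notMem (fun hc => ha (List.mem_filter.1 hc).1),
          List.dedup_cons_of_notMem ha, List.filter_cons_of_pos hp, ih]
    · rw [List.filter_cons_of_neg hp]
      by_cases ha : a ∈ l
      · rw [List.dedup_cons_of_mem ha, ih]
      · rw [List.dedup_cons_of_notMem ha, List.filter_cons_of_neg hp, ih]

private lemma flat_alt (u v : V) :
    ∀ (M A B : ℕ), A ≤ B → B ≤ A + 1 → B ≤ M →
    ((List.range M).flatMap fun i => if i < A then [u, v] else if i < B then [u] else [])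
      = alt u v (A + B) := by
  intro M
  induction M generalizing u v with
  | zero => intro A B h1 h2 h3; interval_cases B <;> interval_cases A <;> simp [alt]
  | succ M ih =>
    intro A B h1 h2 h3
    rw [List.range_succ_eq_map, List.flatMap_cons, List.flatMap_map]
    have hfun : (fun i => if Nat.succ i < A then [u, v] else if Nat.succ i < B then [u] else [])
        = (fun i => if i < A - 1 then [u, v] else if i < B - 1 then [u] else []) := by
      funext i
      split_ifs <;> first | rfl | omega
    rw [hfun]
    rcases Nat.eq_zero_or_pos A with hA | hA
    · subst hA
      rcases Nat.eq_zero_or_pos B with hB | hB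
      · subst hB; simp [ih u v 0 0 le_rfl (by omega) (by omega), alt]
      · have hB1 : B = 1 := by omega
        subst hB1
        simp only [if_neg (by omega : ¬ (0:ℕ) < 0), if_pos (by omega : (0:ℕ) < 1)]
        rw [ih u v 0 0 le_rfl (by omega) (by omega)]
        simp [alt]
    · rw [if_pos (by omega : 0 < A)]
      rw [ih u v (A - 1) (B - 1) (by omega) (by omega) (by omega)]
      have e : A + B = (A - 1 + (B - 1)) + 2 := by omega
      rw [e]
      rfl

private lemma eq_alt_of_chain' [DecidableEq V] {x y : V} (hxy : x ≠ y) :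
    ∀ s : List V, (∀ z ∈ s, z = x ∨ z = y) → s.Chain' (· ≠ ·) →
      s = alt x y s.length ∨ s = alt y x s.length := by
  intro s
  induction s with
  | nil => intro _ _; left; rfl
  | cons a l ih =>
    intro hmem hch
    rw [List.Chain', List.isChain_cons] at hch
    obtain ⟨hhd, hch⟩ := hch
    have hl := ih (fun z hz => hmem z (List.mem_cons_of_mem _ hz)) hch
    rcases hmem a List.mem_cons_self with ha | ha
    · subst ha
      left
      have hl' : l = alt y a l.length := by
        rcases hl with hl | hl
        · cases hn : l.length with
          | zero => rw [hn] at hl; rw [List.length_eq_zero_iff.1 hn]; rfl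
          | succ m =>
            rw [hn] at hl
            exfalso
            have : l.head? = some a := by rw [hl]; rfl
            exact hhd a this rfl
        · exact hl
      show a :: l = alt a y (l.length + 1)
      show a :: l = a :: alt y a l.length
      rw [← hl']
    · subst ha
      right
      have hl' : l = alt x a l.length := by
        rcases hl with hl | hl
        · exact hl
        · cases hn : l.length with
          | zero => rw [hn] at hl; rw [List.length_eq_zero_iff.1 hn]; rfl
          | succ m =>
            rw [hn] at hl
            exfalso
            have : l.head? = some a := by rw [hl]; rfl
            exact hhd a this rfl
      show a :: l = alt a x (l.length + 1)
      show a :: l = a :: alt x a l.length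
      rw [← hl']

private lemma sum_if (k : ℕ) :
    ∀ n : ℕ, (((List.range n).map fun i => if i < k then 1 else 0)).sum = min k n := by
  intro n
  induction n with
  | zero => simp
  | succ n ih =>
    rw [List.range_succ, List.map_append, List.sum_append, ih]
    rcases Nat.lt_or_ge n k with hc | hc
    · simp [hc]; omega
    · simp [Nat.not_lt.2 hc]; omega


private lemma key [DecidableEq V] {x y : V} (hxy : x ≠ y) (w : List V) (M : ℕ)
    (hx : x ∈ w) (hy : y ∈ w) (hMx : w.count x ≤ M) (hMy : w.count y ≤ M)
    (hfw : w.filter (fun z => decide (z = x ∨ z = y))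
        = alt x y (w.filter (fun z => decide (z = x ∨ z = y))).length) :
    ((w ++ (List.range M).flatMap fun i =>
        w.dedup.filter fun z => decide (w.count z + i < M)).filter
      (fun z => decide (z = x ∨ z = y))) = alt x y (2 * M) := by
  have hpx : (fun z => decide (z = x ∨ z = y)) x = true := by simp
  have hpy : (fun z => decide (z = x ∨ z = y)) y = true := by simp
  set n := (w.filter (fun z => decide (z = x ∨ z = y))).length with hn
  have hax : w.count x = (n + 1) / 2 := by
    rw [← List.count_filter (p := fun z => decide (z = x ∨ z = y)) (l := w) hpx, hfw]; exact (count_alt hxy n).1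
  have hay : w.count y = n / 2 := by
    rw [← List.count_filter (p := fun z => decide (z = x ∨ z = y)) (l := w) hpy, hfw]; exact (count_alt hxy n).2
  have hcx1 : 1 ≤ w.count x := List.count_pos_iff.2 hx
  have hcy1 : 1 ≤ w.count y := List.count_pos_iff.2 hy
  have hn2 : 2 ≤ n := by omega
  have hded : w.dedup.filter (fun z => decide (z = x ∨ z = y))
      = if n % 2 = 0 then [x, y] else [y, x] := by
    rw [← dedup_filter, hfw, dedup_alt hxy n hn2]
  have hswap : ∀ i : ℕ,
      List.filter (fun z => decide (z = x ∨ z = y))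
        (w.dedup.filter fun z => decide (w.count z + i < M))
      = List.filter (fun z => decide (w.count z + i < M))
        (w.dedup.filter (fun z => decide (z = x ∨ z = y))) := by
    intro i
    rw [List.filter_filter, List.filter_filter]
    exact List.filter_congr (fun a _ => Bool.and_comm _ _)
  rw [List.filter_append, hfw, List.filter_flatMap]
  by_cases hpar : n % 2 = 0
  · -- even case: counts equal, dedup order [x, y]
    have hfun : (fun i => List.filter (fun z => decide (z = x ∨ z = y))
          (w.dedup.filter fun z => decide (w.count z + i < M)))
        = fun i => if i < M - w.count x then [x, y]
            else if i < M - w.count x then [x] else [] := by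
      funext i
      rw [hswap, hded, if_pos hpar]
      by_cases hi : i < M - w.count x
      · have h1 : w.count x + i < M := by omega
        have h2 : w.count y + i < M := by omega
        simp [List.filter, h1, h2, hi]
      · have h1 : ¬ (w.count x + i < M) := by omega
        have h2 : ¬ (w.count y + i < M) := by omega
        simp [List.filter, h1, h2, hi]
    rw [hfun, flat_alt x y M (M - w.count x) (M - w.count x) le_rfl (by omega) (by omega)]
    have e : 2 * M = n + (M - w.count x + (M - w.count x)) := by omega
    rw [e, alt_append x y n (M - w.count x + (M - w.count x)), if_pos hpar]
  · -- odd case: count x = count y + 1, dedup order [y, x]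
    have hfun : (fun i => List.filter (fun z => decide (z = x ∨ z = y))
          (w.dedup.filter fun z => decide (w.count z + i < M)))
        = fun i => if i < M - w.count x then [y, x]
            else if i < M - w.count y then [y] else [] := by
      funext i
      rw [hswap, hded, if_neg hpar]
      by_cases hi : i < M - w.count x
      · have h1 : w.count x + i < M := by omega
        have h2 : w.count y + i < M := by omega
        simp [List.filter, h1, h2, hi]
      · by_cases hj : i < M - w.count y
        · have h1 : ¬ (w.count x + i < M) := by omega
          have h2 : w.count y + i < M := by omega
          simp [List.filter, h1, h2, hi, hj]
        · have h1 : ¬ (w.count x + i < M) := by omega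
          have h2 : ¬ (w.count y + i < M) := by omega
          simp [List.filter, h1, h2, hi, hj]
    rw [hfun, flat_alt y x M (M - w.count x) (M - w.count y) (by omega) (by omega) (by omega)]
    have e : 2 * M = n + (M - w.count x + (M - w.count y)) := by omega
    rw [e, alt_append x y n (M - w.count x + (M - w.count y)), if_neg hpar]


/-- If a finite graph is word-representable, then some uniform word represents it. -/
theorem exists_uniform_word [Fintype V] [DecidableEq V] (G : SimpleGraph V)
    (h : WordRepresentable G) :
    ∃ w : List V, Represents G w ∧ Uniform w := by

  obtain ⟨w, hw_mem, hw_alt⟩ := h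
  set M := Finset.univ.sup (fun v : V => w.count v) with hM
  have hMv : ∀ v : V, w.count v ≤ M := fun v => by simpa using Finset.le_sup (f := fun v : V => w.count v) (Finset.mem_univ v)
  set t := (List.range M).flatMap
      (fun i => w.dedup.filter fun z => decide (w.count z + i < M)) with ht
  refine ⟨w ++ t, ⟨fun v => List.mem_append_left _ (hw_mem v), ?_⟩, ?_⟩
  · intro x y hxy
    constructor
    · intro halt
      apply (hw_alt x y hxy).1
      have halt' : List.Chain' (· ≠ ·)
          ((w ++ t).filter fun z => decide (z = x ∨ z = y)) := halt
      rw [List.filter_append] at halt'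
      exact halt'.prefix (List.prefix_append _ _)
    · intro hadj
      have hA : List.Chain' (· ≠ ·) (w.filter fun z => decide (z = x ∨ z = y)) :=
        (hw_alt x y hxy).2 hadj
      have hmem' : ∀ z ∈ w.filter (fun z => decide (z = x ∨ z = y)), z = x ∨ z = y := by
        intro z hz
        have := (List.mem_filter.1 hz).2
        simpa using this
      rcases eq_alt_of_chain' hxy _ hmem' hA with hfw | hfw
      · show List.Chain' (· ≠ ·) ((w ++ t).filter fun z => decide (z = x ∨ z = y))
        rw [ht, key hxy w M (hw_mem x) (hw_mem y) (hMv x) (hMv y) hfw]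
        exact chain'_alt hxy _
      · have hcongr : ∀ u : List V, u.filter (fun z => decide (z = x ∨ z = y))
            = u.filter (fun z => decide (z = y ∨ z = x)) :=
          fun u => List.filter_congr (fun a _ => by simp [or_comm])
        have hfw' : w.filter (fun z => decide (z = y ∨ z = x))
            = alt y x (w.filter (fun z => decide (z = y ∨ z = x))).length := by
          rw [← hcongr w]; exact hfw
        show List.Chain' (· ≠ ·) ((w ++ t).filter fun z => decide (z = x ∨ z = y))
        rw [hcongr, ht, key hxy.symm w M (hw_mem y) (hw_mem x) (hMv y) (hMv x) hfw']
        exact chain'_alt hxy.symm _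
  · have hall : ∀ v : V, (w ++ t).count v = M := by
      intro v
      rw [List.count_append]
      have hflat : t.count v = M - w.count v := by
        rw [ht, List.count_flatMap]
        have hF : (List.count v ∘ fun i => w.dedup.filter fun z => decide (w.count z + i < M))
            = fun i => if i < M - w.count v then 1 else 0 := by
          funext i
          show List.count v (w.dedup.filter fun z => decide (w.count z + i < M)) = _
          by_cases hP : w.count v + i < M
          · rw [List.count_filter (by simpa using hP), List.count_dedup,
              if_pos (hw_mem v), if_pos (by omega)]
          · have hnot : v ∉ w.dedup.filter fun z => decide (w.count z + i < M) := by
              intro hmem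
              have := (List.mem_filter.1 hmem).2
              simp at this
              omega
            rw [List.count_eq_zero.2 hnot, if_neg (by omega)]
        rw [hF, sum_if]
        omega
      have := hMv v
      omega
    intro a b _ _
    rw [hall a, hall b]

end WordRepr
end

section
/- Let w = w₁w₂ (the concatenation of words w₁ and w₂) be a uniform word representing a finite simple graph G. Then the word w₂w₁ also represents G. -/
namespace WordRepr

variable {V : Type*}

section Aux

variable [DecidableEq V]

/-- In an alternating two-letter word with head `x`, the count of `x` exceeds the
count of `y` by one iff the last letter is also `x`. -/
lemma alt_count :
    ∀ (l : List V) (x y : V), x ≠ y → List.Chain' (· ≠ ·) l →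
      (∀ z ∈ l, z = x ∨ z = y) → ∀ b, l.head? = some x → l.getLast? = some b →
      l.count x = l.count y + (if x = b then 1 else 0) := by
  intro l
  induction l with
  | nil => intro x y _ _ _ b ha; simp at ha
  | cons c rest ih =>
    intro x y hxy hc hm b ha hb
    have hcx : c = x := by simpa using ha
    subst hcx
    cases rest with
    | nil =>
        have hbc : c = b := by simpa using hb
        have hcy : List.count y [c] = 0 := by
          rw [List.count_eq_zero]
          simp only [List.mem_singleton]
          intro h; exact hxy (h ▸ rfl)
        rw [if_pos hbc, hcy]
        simp
    | cons d t =>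
        have hcd : c ≠ d := (List.isChain_cons_cons.mp hc).1
        have hrest : List.Chain' (· ≠ ·) (d :: t) := (List.isChain_cons_cons.mp hc).2
        have hmem : ∀ z ∈ d :: t, z = y ∨ z = c := by
          intro z hz
          rcases hm z (List.mem_cons_of_mem _ hz) with h | h
          · exact Or.inr h
          · exact Or.inl h
        have hdy : d = y := by
          rcases hm d (by simp) with h | h
          · exact absurd h.symm hcd
          · exact h
        have hb' : (d :: t).getLast? = some b := by
          rw [List.getLast?_cons_cons] at hb; exact hb
        have hd' : (d :: t).head? = some y := by simp [hdy]
        have ihd := ih y c hxy.symm hrest hmem b hd' hb'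
        have hbmem : b = c ∨ b = y := by
          have hb2 : b ∈ d :: t := by
            have hne : d :: t ≠ [] := by simp
            have := (List.getLast?_eq_getLast hne)
            rw [this] at hb'
            exact (Option.some.inj hb') ▸ List.getLast_mem hne
          rcases hmem b hb2 with h | h
          · exact Or.inr h
          · exact Or.inl h
        have hcx2 : List.count c (c :: d :: t) = List.count c (d :: t) + 1 := by
          simp [List.count_cons]
        have hcy2 : List.count y (c :: d :: t) = List.count y (d :: t) := by
          simp [List.count_cons, hxy]
        rw [hcx2, hcy2]
        rcases hbmem with h | h
        · subst h
          rw [if_neg (Ne.symm hxy)] at ihd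
          rw [if_pos rfl]
          omega
        · subst h
          rw [if_pos rfl] at ihd
          rw [if_neg hxy]
          omega

/-- Rotating an alternating two-letter word with equal letter counts keeps it alternating. -/
lemma rotate_alt {x y : V} (hxy : x ≠ y) (a b : List V)
    (hm : ∀ z ∈ a ++ b, z = x ∨ z = y)
    (hcount : (a ++ b).count x = (a ++ b).count y)
    (hch : List.Chain' (· ≠ ·) (a ++ b)) :
    List.Chain' (· ≠ ·) (b ++ a) := by
  have hch' := hch
  change List.IsChain _ (a ++ b) at hch'
  change List.IsChain _ (b ++ a)
  rw [List.isChain_append] at hch' ⊢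
  refine ⟨hch'.2.1, hch'.1, ?_⟩
  intro p hp q hq
  cases a with
  | nil => simp at hq
  | cons c a' =>
    have hq' : c = q := by simpa using hq
    subst hq'
    have hlast : ((c :: a') ++ b).getLast? = some p := by
      rw [List.getLast?_append]
      have hpb : b.getLast? = some p := hp
      simp [hpb]
    rcases hm c (by simp) with h | h
    · subst h
      have hhead : ((c :: a') ++ b).head? = some c := rfl
      have hcnt := alt_count _ c y hxy hch hm p hhead hlast
      have : c ≠ p := by
        intro hpe
        rw [if_pos hpe] at hcnt
        omega
      exact fun he => this he.symm
    · subst h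
      have hhead : ((c :: a') ++ b).head? = some c := rfl
      have hm' : ∀ z ∈ (c :: a') ++ b, z = c ∨ z = x := by
        intro z hz
        rcases hm z hz with h | h
        · exact Or.inr h
        · exact Or.inl h
      have hcnt := alt_count _ c x hxy.symm hch hm' p hhead hlast
      have : c ≠ p := by
        intro hpe
        rw [if_pos hpe] at hcnt
        omega
      exact fun he => this he.symm

end Aux

/-- If the uniform word `w₁ ++ w₂` represents `G`, then so does `w₂ ++ w₁`. -/
theorem represents_of_cyclic_shift [Fintype V] [DecidableEq V] (G : SimpleGraph V)
    (w₁ w₂ : List V) (hu : Uniform (w₁ ++ w₂)) (hr : Represents G (w₁ ++ w₂)) :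
    Represents G (w₂ ++ w₁) := by
  have key : ∀ (u₁ u₂ : List V) (x y : V), x ≠ y →
      (u₁ ++ u₂).count x = (u₁ ++ u₂).count y →
      Alternates (u₁ ++ u₂) x y → Alternates (u₂ ++ u₁) x y := by
    intro u₁ u₂ x y hxy hcount h
    unfold Alternates at h ⊢
    rw [List.filter_append] at h ⊢
    refine rotate_alt hxy _ _ ?_ ?_ h
    · intro z hz
      rw [← List.filter_append] at hz
      simpa using List.of_mem_filter hz
    · rw [← List.filter_append]
      rw [List.count_filter (by simp), List.count_filter (by simp)]
      exact hcount
  constructor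
  · intro v
    have := hr.1 v
    simp only [List.mem_append] at this ⊢
    tauto
  · intro x y hxy
    rw [← hr.2 x y hxy]
    have hx : x ∈ w₁ ++ w₂ := hr.1 x
    have hy : y ∈ w₁ ++ w₂ := hr.1 y
    have hcx : (w₁ ++ w₂).count x = (w₁ ++ w₂).count y := hu x y hx hy
    have hcx' : (w₂ ++ w₁).count x = (w₂ ++ w₁).count y := by
      simp only [List.count_append] at hcx ⊢
      omega
    exact ⟨key w₂ w₁ x y hxy hcx', key w₁ w₂ x y hxy hcx⟩

end WordRepr
end

section
/- Suppose an undirected finite simple graph G has a cycle C = x₁x₂⋯x_m x₁ with m ≥ 4 whose vertex set {x₁,…,x_m} does not induce a clique in G. If G is given a semi-transitive orientation in which m−2 of the edges of C are oriented in the same direction around the cycle (i.e., each of these edges is oriented from x_i to x_{i+1}, indices taken modulo m), then the remaining two edges of C are both oriented in the opposite direction (from x_{i+1} to x_i). -/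
namespace WordRepr

variable {V : Type*}

open Fin.CommRing

/-- If `m - 2` edges of a non-clique cycle of length `m ≥ 4` are oriented forwards in a
semi-transitive orientation, then the remaining two edges are oriented backwards. -/
theorem cycle_two_edges_reversed [Fintype V] (G : SimpleGraph V) (o : V → V → Prop)
    (hst : SemiTransitive G o)
    (m : ℕ) [NeZero m] (hm : 4 ≤ m) (x : Fin m → V) (hinj : Function.Injective x)
    (hcyc : ∀ i : Fin m, G.Adj (x i) (x (i + 1)))
    (hnc : ¬ ∀ i j : Fin m, i ≠ j → G.Adj (x i) (x j))
    (S : Finset (Fin m)) (hS : S.card = m - 2)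
    (hfor : ∀ i ∈ S, o (x i) (x (i + 1))) :
    ∀ i ∉ S, o (x (i + 1)) (x i) := by
  classical
  intro i hi
  obtain ⟨hor, hacyc, hsemi⟩ := hst
  by_contra hocon
  have h : o (x i) (x (i + 1)) := (hor.2 _ _ (hcyc i)).mpr hocon
  have hmpos : 0 < m := by omega
  -- the complement of S has exactly two elements, i and some j ≠ i
  have hcard : Sᶜ.card = 2 := by
    have := Finset.card_compl S
    simp only [Fintype.card_fin, hS] at this
    omega
  have hiC : i ∈ Sᶜ := Finset.mem_compl.mpr hi
  have herase : (Sᶜ.erase i).card = 1 := by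
    rw [Finset.card_erase_of_mem hiC, hcard]
  obtain ⟨j, hjmem⟩ := Finset.card_pos.mp (by omega : 0 < (Sᶜ.erase i).card)
  have hji : j ≠ i := (Finset.mem_erase.mp hjmem).1
  have hjC : j ∈ Sᶜ := (Finset.mem_erase.mp hjmem).2
  have hCeq : Sᶜ = {i, j} := by
    refine (Finset.eq_of_subset_of_card_le ?_ ?_).symm
    · intro k hk
      rcases Finset.mem_insert.mp hk with rfl | hk
      · exact hiC
      · exact Finset.mem_singleton.mp hk ▸ hjC
    · rw [hcard, Finset.card_insert_of_notMem (by simp [hji.symm]),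
        Finset.card_singleton]
  -- every edge except possibly edge j is oriented forwards
  have forward : ∀ k : Fin m, k ≠ j → o (x k) (x (k + 1)) := by
    intro k hk
    by_cases hkS : k ∈ S
    · exact hfor k hkS
    · have : k ∈ Sᶜ := Finset.mem_compl.mpr hkS
      rw [hCeq, Finset.mem_insert, Finset.mem_singleton] at this
      rcases this with rfl | rfl
      · exact h
      · exact absurd rfl hk
  by_cases hj : o (x j) (x (j + 1))
  · -- all edges forward: directed cycle, contradicting acyclicity
    have hall : ∀ k : Fin m, o (x k) (x (k + 1)) := by
      intro k
      by_cases hk : k = j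
      · exact hk ▸ hj
      · exact forward k hk
    have key : ∀ n : ℕ, Relation.TransGen o (x 0) (x ((n + 1 : ℕ) : Fin m)) := by
      intro n
      induction n with
      | zero => simpa using Relation.TransGen.single (hall 0)
      | succ n ih =>
          have := Relation.TransGen.tail ih (hall ((n + 1 : ℕ) : Fin m))
          have hc : (((n + 1 : ℕ) : Fin m) + 1) = ((n + 1 + 1 : ℕ) : Fin m) := by
            push_cast; ring
          rwa [hc] at this
    have := key (m - 1)
    have hc : ((m - 1 + 1 : ℕ) : Fin m) = 0 := by
      have h1 : (m - 1 + 1 : ℕ) = m := by omega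
      rw [h1, Fin.natCast_self]
    rw [hc] at this
    exact hacyc _ this
  · -- edge j is the unique backward edge: semi-transitivity forces a clique
    set p : Fin (m - 1 + 1) → V := fun t => x (j + 1 + (t.val : Fin m)) with hp
    have hedges : ∀ t : Fin (m - 1), o (p t.castSucc) (p t.succ) := by
      intro t
      have htlt : (t : ℕ) < m - 1 := t.isLt
      have hkj : j + 1 + ((t : ℕ) : Fin m) ≠ j := by
        intro heq
        have h2 : (1 : Fin m) + ((t : ℕ) : Fin m) = 0 := by
          have h3 : j + ((1 : Fin m) + ((t : ℕ) : Fin m)) = j + 0 := by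
            rw [add_zero, ← add_assoc]; exact heq
          exact add_left_cancel h3
        have hc : (1 : Fin m) + ((t : ℕ) : Fin m) = (((t : ℕ) + 1 : ℕ) : Fin m) := by
          push_cast; ring
        rw [hc] at h2
        have := congrArg Fin.val h2
        rw [Fin.val_cast_of_lt (by omega)] at this
        simp at this
      have hfwd := forward (j + 1 + ((t : ℕ) : Fin m)) hkj
      have hcs : p t.castSucc = x (j + 1 + ((t : ℕ) : Fin m)) := rfl
      have hsc : p t.succ = x (j + 1 + ((t : ℕ) : Fin m) + 1) := by
        show x (j + 1 + (((t : ℕ) + 1 : ℕ) : Fin m)) = _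
        congr 1
        push_cast
        ring
      rw [hcs, hsc]
      exact hfwd
    have hadj0 : G.Adj (p 0) (p (Fin.last (m - 1))) := by
      have h0 : p 0 = x (j + 1) := by
        show x (j + 1 + ((0 : ℕ) : Fin m)) = x (j + 1)
        norm_num
      have hl : p (Fin.last (m - 1)) = x j := by
        show x (j + 1 + ((m - 1 : ℕ) : Fin m)) = x j
        congr 1
        have h4 : (1 : Fin m) + ((m - 1 : ℕ) : Fin m) = 0 := by
          have h5 : ((1 + (m - 1) : ℕ) : Fin m) = 0 := by
            have h6 : (1 + (m - 1) : ℕ) = m := by omega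
            rw [h6, Fin.natCast_self]
          rw [← h5]; push_cast; ring
        rw [add_assoc, h4, add_zero]
      rw [h0, hl]
      exact (hcyc j).symm
    have hso := hsemi (m - 1) p hedges hadj0
    -- every pair of cycle vertices is adjacent: contradiction with hnc
    apply hnc
    intro u v huv
    have key : ∀ a b : Fin (m - 1 + 1), (a : ℕ) < (b : ℕ) → G.Adj (p a) (p b) := by
      intro a b hab
      exact hor.1 _ _ (hso a b hab)
    set a : Fin m := u - (j + 1) with ha
    set b : Fin m := v - (j + 1) with hb
    have hma : m - 1 + 1 = m := by omega
    have ha' : (a.val : Fin m) = a := Fin.cast_val_eq_self a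
    have hb' : (b.val : Fin m) = b := Fin.cast_val_eq_self b
    have hpa : p ⟨a.val, by omega⟩ = x u := by
      show x (j + 1 + ((a.val : ℕ) : Fin m)) = x u
      rw [ha', ha]
      congr 1
      ring
    have hpb : p ⟨b.val, by omega⟩ = x v := by
      show x (j + 1 + ((b.val : ℕ) : Fin m)) = x v
      rw [hb', hb]
      congr 1
      ring
    have hab : a ≠ b := by
      intro hab
      rw [ha, hb] at hab
      exact huv (by
        have := congrArg (fun z => z + (j + 1)) hab
        simpa using this)
    rcases lt_trichotomy a.val b.val with hlt | heq | hgt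
    · have := key ⟨a.val, by omega⟩ ⟨b.val, by omega⟩ hlt
      rwa [hpa, hpb] at this
    · exact absurd (Fin.ext heq) hab
    · have := key ⟨b.val, by omega⟩ ⟨a.val, by omega⟩ hgt
      rw [hpa, hpb] at this
      exact this.symm

end WordRepr
end

section
/- Suppose an undirected finite simple graph G has a cycle C = x₁x₂⋯x_m x₁ with m ≥ 4 whose vertex set does not induce a clique in G. If G is given a semi-transitive orientation in which m−2 of the edges of C are oriented in the forward direction around the cycle (from x_i to x_{i+1}, indices modulo m) and one of the two remaining edges is oriented in the backward direction (from x_{i+1} to x_i), then the last remaining edge of C is also oriented in the backward direction. -/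
namespace WordRepr

variable {V : Type*}

/-- If `m - 2` edges of a non-clique cycle of length `m ≥ 4` are oriented forwards in a
semi-transitive orientation and one of the two remaining edges is oriented backwards,
then the last remaining edge is also oriented backwards. -/
theorem cycle_last_edge_reversed [Fintype V] (G : SimpleGraph V) (o : V → V → Prop)
    (hst : SemiTransitive G o)
    (m : ℕ) [NeZero m] (hm : 4 ≤ m) (x : Fin m → V) (hinj : Function.Injective x)
    (hcyc : ∀ i : Fin m, G.Adj (x i) (x (i + 1)))
    (hnc : ¬ ∀ i j : Fin m, i ≠ j → G.Adj (x i) (x j))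
    (S : Finset (Fin m)) (hS : S.card = m - 2)
    (hfor : ∀ i ∈ S, o (x i) (x (i + 1)))
    (j : Fin m) (hj : j ∉ S) (hback : o (x (j + 1)) (x j)) :
    ∀ i : Fin m, i ∉ S → i ≠ j → o (x (i + 1)) (x i) := by
  intro i hiS hij
  by_contra hni
  have hio : o (x i) (x (i + 1)) := by
    have h := hst.1.2 (x i) (x (i + 1)) (hcyc i)
    tauto
  have hm0 : 0 < m := NeZero.pos m
  have hmm : m - 1 + 1 = m := by omega
  have h1v : (1 : Fin m).val = 1 := by
    rw [Fin.val_one', Nat.mod_eq_of_lt (by omega)]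
  have hval : ∀ u v : Fin m,
      (u.val + v.val < m → (u + v).val = u.val + v.val) ∧
      (m ≤ u.val + v.val → (u + v).val = u.val + v.val - m) := by
    intro u v
    have hu := u.isLt; have hv := v.isLt
    constructor
    · intro h; rw [Fin.val_add, Nat.mod_eq_of_lt h]
    · intro h; rw [Fin.val_add, Nat.mod_eq_sub_mod h, Nat.mod_eq_of_lt (by omega)]
  -- every edge other than edge j is oriented forwards
  have hedge : ∀ e : Fin m, e ≠ j → o (x e) (x (e + 1)) := by
    intro e he
    by_cases heS : e ∈ S
    · exact hfor e heS
    · have hei : e = i := by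
        by_contra hei
        have hcard : (insert e (insert i (insert j S))).card = m + 1 := by
          rw [Finset.card_insert_of_notMem (by simp [heS, hei, he]),
              Finset.card_insert_of_notMem (by simp [hiS, hij]),
              Finset.card_insert_of_notMem hj, hS]
          omega
        have hle := Finset.card_le_univ (insert e (insert i (insert j S)))
        rw [hcard, Fintype.card_fin] at hle
        omega
      rw [hei]; exact hio
  set p : Fin (m - 1 + 1) → V := fun a => x (j + 1 + Fin.cast hmm a) with hp
  have key : ∀ a b : Fin (m - 1 + 1), a < b → o (p a) (p b) := by
    apply hst.2.2
    · intro a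
      have ha := a.isLt
      set c : Fin m := Fin.cast hmm a.castSucc with hc
      have hcv : c.val = a.val := rfl
      have h1 : (Fin.cast hmm a.succ : Fin m) = c + 1 := by
        apply Fin.ext
        have := (hval c 1).1 (by omega)
        simp only [Fin.coe_cast, Fin.val_succ, h1v] at *
        omega
      have h2 : j + 1 + c ≠ j := by
        intro h
        have hv := congrArg Fin.val h
        have hj1 := hval j 1
        have hj2 := hval (j + 1) c
        have hjl := j.isLt
        have hjc := (j + 1).isLt
        rw [h1v] at hj1
        omega
      simp only [hp, h1, ← add_assoc]
      exact hedge _ h2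
    · have h0 : (Fin.cast hmm (0 : Fin (m - 1 + 1)) : Fin m) = 0 := by
        apply Fin.ext; simp
      have hlast : j + 1 + Fin.cast hmm (Fin.last (m - 1)) = j := by
        apply Fin.ext
        have hlv : (Fin.cast hmm (Fin.last (m - 1)) : Fin m).val = m - 1 := rfl
        have hj1 := hval j 1
        have hj2 := hval (j + 1) (Fin.cast hmm (Fin.last (m - 1)))
        have hjl := j.isLt
        have hjc := (j + 1).isLt
        rw [h1v] at hj1
        omega
      simp only [hp, h0, add_zero, hlast]
      exact (hcyc j).symm
  have hclique : ∀ u v : Fin m, u ≠ v → G.Adj (x u) (x v) := by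
    have main : ∀ u v : Fin m, (u - (j + 1)).val < (v - (j + 1)).val → G.Adj (x u) (x v) := by
      intro u v hlt
      have hau : (u - (j + 1)).val < m - 1 + 1 := by
        have := (u - (j + 1)).isLt; omega
      have hav : (v - (j + 1)).val < m - 1 + 1 := by
        have := (v - (j + 1)).isLt; omega
      have hkey := key ⟨(u - (j + 1)).val, hau⟩ ⟨(v - (j + 1)).val, hav⟩ hlt
      have hpu : p ⟨(u - (j + 1)).val, hau⟩ = x u := by
        simp only [hp]
        congr 1
        have hcu : (Fin.cast hmm ⟨(u - (j + 1)).val, hau⟩ : Fin m) = u - (j + 1) :=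
          Fin.ext rfl
        rw [hcu]; abel
      have hpv : p ⟨(v - (j + 1)).val, hav⟩ = x v := by
        simp only [hp]
        congr 1
        have hcv : (Fin.cast hmm ⟨(v - (j + 1)).val, hav⟩ : Fin m) = v - (j + 1) :=
          Fin.ext rfl
        rw [hcv]; abel
      rw [hpu, hpv] at hkey
      exact hst.1.1 _ _ hkey
    intro u v huv
    rcases Nat.lt_trichotomy (u - (j + 1)).val (v - (j + 1)).val with h | h | h
    · exact main u v h
    · exfalso
      exact huv (sub_left_inj.mp (Fin.ext h))
    · exact (main v u h).symm
  exact hnc hclique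

end WordRepr
end

section
/- Suppose a finite simple graph G is word-representable and v is a vertex of G. Then there exists a semi-transitive orientation of G in which v is a source, i.e., every edge incident with v is oriented away from v. -/
namespace WordRepr

variable {V : Type*}

section Aux
variable [DecidableEq V]


def P (w : List V) (x y : V) : Prop :=
  ∀ n : ℕ, ((w.take n).count y ≤ (w.take n).count x) ∧
    ((w.take n).count x ≤ (w.take n).count y + 1)

def F (w : List V) (x y : V) : Prop :=
  List.Chain' (· ≠ ·) (y :: (w.filter fun z => decide (z = x ∨ z = y)))

lemma filter_swap (w : List V) (x y : V) :
    (w.filter fun z => decide (z = x ∨ z = y)) = (w.filter fun z => decide (z = y ∨ z = x)) := by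
  apply List.filter_congr; intro z _; simp [or_comm]

lemma P_refl (w : List V) (x : V) : P w x x := fun _ => ⟨le_refl _, Nat.le_succ _⟩

lemma EQ : ∀ (w : List V) {x y : V}, x ≠ y → (F w x y ↔ P w x y) := by
  intro w
  induction w with
  | nil =>
    intro x y hxy
    constructor
    · intro _ n; simp [List.take_nil]
    · intro _; simp [F, List.Chain']
  | cons a w ih =>
    intro x y hxy
    by_cases hax : a = x
    · subst hax
      have hf : (a :: w).filter (fun z => decide (z = a ∨ z = y))
          = a :: w.filter (fun z => decide (z = a ∨ z = y)) := by
        simp [List.filter_cons]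
      have step : F (a :: w) a y ↔ F w y a := by
        rw [F, hf]; unfold List.Chain'; rw [List.isChain_cons_cons, filter_swap w a y]
        constructor
        · rintro ⟨_, h2⟩; exact h2
        · intro h; exact ⟨Ne.symm hxy, h⟩
      have stepP : P (a :: w) a y ↔ P w y a := by
        constructor
        · intro h n
          have := h (n + 1)
          simp [List.count_cons, hxy] at this
          omega
        · intro h n
          cases n with
          | zero => simp
          | succ m =>
            have := h m
            simp [List.count_cons, hxy]
            omega
      rw [step, stepP]; exact ih (Ne.symm hxy)
    · by_cases hay : a = y
      · subst hay
        have hf : (a :: w).filter (fun z => decide (z = x ∨ z = a))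
            = a :: w.filter (fun z => decide (z = x ∨ z = a)) := by
          simp [List.filter_cons]
        constructor
        · intro hF
          exfalso
          rw [F, hf] at hF
          exact (List.isChain_cons_cons.1 hF).1 rfl
        · intro hP
          exfalso
          have := hP 1
          simp [List.count_cons, hax] at this
      · have hf : (a :: w).filter (fun z => decide (z = x ∨ z = y))
            = w.filter (fun z => decide (z = x ∨ z = y)) := by
          simp [List.filter_cons, hax, hay]
        have step : F (a :: w) x y ↔ F w x y := by rw [F, hf]; rfl
        have stepP : P (a :: w) x y ↔ P w x y := by
          constructor
          · intro h n
            have := h (n + 1)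
            simp only [List.take_succ_cons, List.count_cons, beq_iff_eq,
              if_neg hax, if_neg hay] at this
            simpa using this
          · intro h n
            cases n with
            | zero => simp
            | succ m =>
              have := h m
              simp only [List.take_succ_cons, List.count_cons, beq_iff_eq,
                if_neg hax, if_neg hay]
              simpa using this
        rw [step, stepP]; exact ih hxy

lemma F_alt {w : List V} {x y : V} (h : F w x y) : Alternates w x y := h.tail

lemma alt_F {w : List V} {x y : V} (hx : x ∈ w) (hxy : x ≠ y) (h : Alternates w x y) :
    F w x y ∨ F w y x := by
  have hxl : x ∈ w.filter fun z => decide (z = x ∨ z = y) :=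
    List.mem_filter.2 ⟨hx, by simp⟩
  unfold Alternates at h
  rcases hl : w.filter fun z => decide (z = x ∨ z = y) with _ | ⟨a, t⟩
  · rw [hl] at hxl; simp at hxl
  · have ha : a = x ∨ a = y := by
      have : a ∈ w.filter fun z => decide (z = x ∨ z = y) := by rw [hl]; exact List.mem_cons_self
      simpa using (List.mem_filter.1 this).2
    rw [hl] at h
    rcases ha with rfl | rfl
    · left; rw [F, hl]; exact List.isChain_cons_cons.2 ⟨Ne.symm hxy, h⟩
    · right; rw [F, ← filter_swap, hl]; exact List.isChain_cons_cons.2 ⟨hxy, h⟩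

lemma not_both {w : List V} {x y : V} (hx : x ∈ w) (hxy : x ≠ y) :
    ¬ (F w x y ∧ F w y x) := by
  rintro ⟨h1, h2⟩
  have hxl : x ∈ w.filter fun z => decide (z = x ∨ z = y) :=
    List.mem_filter.2 ⟨hx, by simp⟩
  rw [F, ← filter_swap] at h2
  rw [F] at h1
  rcases hl : w.filter fun z => decide (z = x ∨ z = y) with _ | ⟨a, t⟩
  · rw [hl] at hxl; simp at hxl
  · rw [hl] at h1 h2
    have ha : a = x ∨ a = y := by
      have : a ∈ w.filter fun z => decide (z = x ∨ z = y) := by rw [hl]; exact List.mem_cons_self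
      simpa using (List.mem_filter.1 this).2
    rcases ha with rfl | rfl
    · exact (List.isChain_cons_cons.1 h2).1 rfl
    · exact (List.isChain_cons_cons.1 h1).1 rfl

lemma idx_lt_of_mem_take : ∀ (w : List V) (n : ℕ) (x : V), x ∈ w.take n → w.idxOf x < n := by
  intro w
  induction w with
  | nil => intro n x h; simp at h
  | cons a w ih =>
    intro n x h
    cases n with
    | zero => simp at h
    | succ m =>
      rw [List.take_succ_cons] at h
      rcases List.mem_cons.1 h with rfl | h
      · rw [List.idxOf_cons_self]; omega
      · by_cases hxa : x = a
        · subst hxa; rw [List.idxOf_cons_self]; omega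
        · rw [List.idxOf_cons_ne _ (Ne.symm hxa)]
          exact Nat.succ_lt_succ (ih m x h)

lemma mem_take_succ_indexOf : ∀ (w : List V) (x : V), x ∈ w → x ∈ w.take (w.idxOf x + 1) := by
  intro w
  induction w with
  | nil => intro x h; simp at h
  | cons a w ih =>
    intro x h
    by_cases hxa : x = a
    · subst hxa; rw [List.idxOf_cons_self]; simp
    · rw [List.idxOf_cons_ne _ (Ne.symm hxa), List.take_succ_cons]
      exact List.mem_cons.2 (Or.inr (ih x ((List.mem_cons.1 h).resolve_left hxa)))


lemma P_lt_indexOf {w : List V} {x y : V} (hx : x ∈ w) (hy : y ∈ w) (hxy : x ≠ y)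
    (hP : P w x y) : w.idxOf x < w.idxOf y := by
  have hne : w.idxOf x ≠ w.idxOf y := fun h => hxy ((List.idxOf_inj hx).1 h)
  rcases lt_or_gt_of_ne hne with h | h
  · exact h
  · exfalso
    set n := w.idxOf y + 1 with hn
    have hymem : y ∈ w.take n := mem_take_succ_indexOf w y hy
    have hxnot : x ∉ w.take n := fun hmem => by
      have := idx_lt_of_mem_take w n x hmem; omega
    have h1 : 0 < (w.take n).count y := List.count_pos_iff.2 hymem
    have h2 : (w.take n).count x = 0 := List.count_eq_zero.2 hxnot
    have := (hP n).1
    omega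

/-- monotone chain of prefix counts -/
lemma CORE {w : List V} {q : ℕ → V} {K : ℕ}
    (hch : ∀ l, l < K → P w (q l) (q (l + 1)))
    (hend : P w (q 0) (q K)) :
    ∀ a b, a ≤ b → b ≤ K → P w (q a) (q b) := by
  have mono' : ∀ d a, a + d ≤ K → ∀ n,
      ((w.take n).count (q (a + d)) ≤ (w.take n).count (q a)) := by
    intro d
    induction d with
    | zero => intro a _ n; exact le_refl _
    | succ m ih =>
      intro a h n
      have h1 := (hch (a + m) (by omega) n).1
      have h2 := ih a (by omega) n
      have e : a + (m + 1) = (a + m) + 1 := by omega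
      rw [e]
      omega
  have mono : ∀ a b, a ≤ b → b ≤ K → ∀ n,
      ((w.take n).count (q b) ≤ (w.take n).count (q a)) := by
    intro a b hab hbK n
    have := mono' (b - a) a (by omega) n
    have e : a + (b - a) = b := by omega
    rw [e] at this
    exact this
  intro a b hab hbK n
  refine ⟨mono a b hab hbK n, ?_⟩
  have h1 : (w.take n).count (q a) ≤ (w.take n).count (q 0) := mono 0 a (by omega) (by omega) n
  have h2 := (hend n).2
  have h3 : (w.take n).count (q K) ≤ (w.take n).count (q b) := mono b K hbK (le_refl _) n
  omega

section Orient
variable {G : SimpleGraph V} {w : List V}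

/-- the orientation induced by a representing word -/
def wo (G : SimpleGraph V) (w : List V) (x y : V) : Prop := G.Adj x y ∧ F w x y

lemma wo_P (h : wo G w x y) : P w x y := (EQ w h.1.ne).1 h.2

lemma wo_lt (hrep : Represents G w) (h : wo G w x y) : w.idxOf x < w.idxOf y :=
  P_lt_indexOf (hrep.1 x) (hrep.1 y) h.1.ne (wo_P h)

lemma adj_or (hrep : Represents G w) (h : G.Adj x y) : wo G w x y ∨ wo G w y x := by
  have hne := h.ne
  have halt : Alternates w x y := (hrep.2 x y hne).2 h
  rcases alt_F (hrep.1 x) hne halt with hF | hF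
  · exact Or.inl ⟨h, hF⟩
  · exact Or.inr ⟨h.symm, hF⟩

lemma wo_orient (hrep : Represents G w) : IsOrientationOf G (wo G w) := by
  refine ⟨fun x y h => h.1, fun x y h => ⟨fun h1 h2 => ?_, fun h1 => ?_⟩⟩
  · exact not_both (hrep.1 x) h.ne ⟨h1.2, h2.2⟩
  · rcases adj_or hrep h with h' | h'
    · exact h'
    · exact absurd h' h1

lemma transGen_lt (hrep : Represents G w) {a b : V} (h : Relation.TransGen (wo G w) a b) :
    w.idxOf a < w.idxOf b := by
  induction h with
  | single h => exact wo_lt hrep h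
  | tail _ h ih => exact ih.trans (wo_lt hrep h)

lemma wo_acyclic (hrep : Represents G w) : Acyclic (wo G w) :=
  fun v h => lt_irrefl _ (transGen_lt hrep h)

lemma star (hrep : Represents G w) (q : ℕ → V) (K : ℕ) (hK : 0 < K)
    (hch : ∀ l, l < K → wo G w (q l) (q (l + 1))) (hend : G.Adj (q 0) (q K)) :
    ∀ a b, a < b → b ≤ K → wo G w (q a) (q b) := by
  have hPch : ∀ l, l < K → P w (q l) (q (l + 1)) := fun l hl => wo_P (hch l hl)
  have hlt' : ∀ d a, a + d + 1 ≤ K → w.idxOf (q a) < w.idxOf (q (a + d + 1)) := by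
    intro d
    induction d with
    | zero => intro a h; simpa using wo_lt hrep (hch a (by omega))
    | succ m ih =>
      intro a h
      have h1 := ih a (by omega)
      have h2 := wo_lt hrep (hch (a + m + 1) (by omega))
      have e : a + (m + 1) + 1 = (a + m + 1) + 1 := by omega
      rw [e]
      omega
  have hlt : ∀ a b, a < b → b ≤ K → w.idxOf (q a) < w.idxOf (q b) := by
    intro a b hab hbK
    have := hlt' (b - a - 1) a (by omega)
    have e : a + (b - a - 1) + 1 = b := by omega
    rwa [e] at this
  have hP0K : P w (q 0) (q K) := by
    rcases adj_or hrep hend with h | h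
    · exact wo_P h
    · exact absurd (wo_lt hrep h) (by have := hlt 0 K hK (le_refl _); omega)
  intro a b hab hbK
  have hne : q a ≠ q b := by
    intro e
    have := hlt a b hab hbK
    rw [e] at this
    omega
  have hP : P w (q a) (q b) := CORE hPch hP0K a b (le_of_lt hab) hbK
  have hF : F w (q a) (q b) := (EQ w hne).2 hP
  exact ⟨(hrep.2 _ _ hne).1 (F_alt hF), hF⟩

lemma wo_semiTrans (hrep : Represents G w) : SemiTransitive G (wo G w) := by
  refine ⟨wo_orient hrep, wo_acyclic hrep, ?_⟩
  intro k p hch hadj i j hij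
  rcases Nat.eq_zero_or_pos k with rfl | hk
  · exact absurd (Fin.lt_def.1 hij) (by omega)
  · set q : ℕ → V := fun l => p ⟨l % (k + 1), Nat.mod_lt _ k.succ_pos⟩ with hq
    have hmk : ∀ (l : ℕ) (hl : l < k + 1), q l = p ⟨l, hl⟩ := by
      intro l hl
      simp only [hq]
      congr 1
      exact Fin.ext (Nat.mod_eq_of_lt hl)
    have hch' : ∀ l, l < k → wo G w (q l) (q (l + 1)) := by
      intro l hl
      rw [hmk l (by omega), hmk (l + 1) (by omega)]
      exact hch ⟨l, hl⟩
    have hend : G.Adj (q 0) (q k) := by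
      rw [hmk 0 (by omega), hmk k (by omega)]
      have e0 : (⟨0, by omega⟩ : Fin (k + 1)) = 0 := rfl
      have e1 : (⟨k, by omega⟩ : Fin (k + 1)) = Fin.last k := rfl
      rw [e0, e1]
      exact hadj
    have := star hrep q k hk hch' hend i.val j.val (Fin.lt_def.1 hij) (by omega)
    rwa [hmk i.val i.isLt, hmk j.val j.isLt, Fin.eta, Fin.eta] at this

end Orient

section Flip
variable {G : SimpleGraph V} {w : List V} {v : V}

/-- vertices reachable from `v` (including `v`) -/
def SS (G : SimpleGraph V) (w : List V) (v u : V) : Prop :=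
  u = v ∨ Relation.TransGen (wo G w) v u

/-- the orientation obtained by flipping all edges leaving the reachable set of `v` -/
def fo (G : SimpleGraph V) (w : List V) (v x y : V) : Prop :=
  ((SS G w v x ↔ SS G w v y) ∧ wo G w x y) ∨ (SS G w v x ∧ ¬ SS G w v y ∧ G.Adj x y)

lemma SS_succ (hx : SS G w v x) (h : wo G w x y) : SS G w v y := by
  rcases hx with rfl | hx
  · exact Or.inr (Relation.TransGen.single h)
  · exact Or.inr (hx.tail h)

lemma cross (hrep : Represents G w) (hx : SS G w v x) (hy : ¬ SS G w v y)
    (h : G.Adj x y) : wo G w y x := by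
  rcases adj_or hrep h with h' | h'
  · exact absurd (SS_succ hx h') hy
  · exact h'

lemma fo_wo (h : fo G w v x y) (hiff : SS G w v x ↔ SS G w v y) : wo G w x y := by
  rcases h with h | h
  · exact h.2
  · exact absurd (hiff.1 h.1) h.2.1

lemma fo_back (h : fo G w v x y) (hy : SS G w v y) : SS G w v x := by
  rcases h with h | h
  · exact h.1.2 hy
  · exact h.1

lemma fo_adj (hrep : Represents G w) (h : fo G w v x y) : G.Adj x y := by
  rcases h with h | h
  · exact h.2.1
  · exact h.2.2

lemma fo_orient (hrep : Represents G w) : IsOrientationOf G (fo G w v) := by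
  refine ⟨fun x y h => fo_adj hrep h, fun x y hadj => ?_⟩
  by_cases hx : SS G w v x <;> by_cases hy : SS G w v y
  · constructor
    · intro h1 h2
      exact not_both (hrep.1 x) hadj.ne ⟨(fo_wo h1 (iff_of_true hx hy)).2,
        (fo_wo h2 (iff_of_true hy hx)).2⟩
    · intro h1
      rcases adj_or hrep hadj with h | h
      · exact Or.inl ⟨iff_of_true hx hy, h⟩
      · exact absurd (Or.inl ⟨iff_of_true hy hx, h⟩) h1
  · constructor
    · rintro - (h | h)
      · exact hy (h.1.2 hx)
      · exact hy h.1
    · intro _; exact Or.inr ⟨hx, hy, hadj⟩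
  · constructor
    · rintro (h | h)
      · exact absurd (h.1.2 hy) hx
      · exact absurd h.1 hx
    · intro h1
      exact absurd (Or.inr ⟨hy, hx, hadj.symm⟩) h1
  · constructor
    · intro h1 h2
      exact not_both (hrep.1 x) hadj.ne ⟨(fo_wo h1 (iff_of_false hx hy)).2,
        (fo_wo h2 (iff_of_false hy hx)).2⟩
    · intro h1
      rcases adj_or hrep hadj with h | h
      · exact Or.inl ⟨iff_of_false hx hy, h⟩
      · exact absurd (Or.inl ⟨iff_of_false hy hx, h⟩) h1

lemma fo_acyclic (hrep : Represents G w) : Acyclic (fo G w v) := by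
  intro u hu
  set r : V → V → Prop := fun x y =>
    (SS G w v x ∧ ¬ SS G w v y) ∨ ((SS G w v x ↔ SS G w v y) ∧ w.idxOf x < w.idxOf y)
    with hr
  have hsub : ∀ x y, fo G w v x y → r x y := by
    rintro x y (h | h)
    · exact Or.inr ⟨h.1, wo_lt hrep h.2⟩
    · exact Or.inl ⟨h.1, h.2.1⟩
  have htrans : ∀ a b c, r a b → r b c → r a c := by
    rintro a b c (⟨ha, hb⟩ | ⟨hab, hlt⟩) (⟨hb', hc⟩ | ⟨hbc, hlt'⟩)
    · exact absurd hb' hb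
    · exact Or.inl ⟨ha, fun hc => hb (hbc.2 hc)⟩
    · exact Or.inl ⟨hab.2 hb', hc⟩
    · exact Or.inr ⟨hab.trans hbc, hlt.trans hlt'⟩
  have : ∀ a b, Relation.TransGen (fo G w v) a b → r a b := by
    intro a b h
    induction h with
    | single h => exact hsub _ _ h
    | tail _ h ih => exact htrans _ _ _ ih (hsub _ _ h)
  rcases this u u hu with ⟨h1, h2⟩ | ⟨_, h2⟩
  · exact h2 h1
  · exact lt_irrefl _ h2

lemma fo_semi (hrep : Represents G w) :
    ∀ (k : ℕ) (p : Fin (k + 1) → V),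
      (∀ i : Fin k, fo G w v (p i.castSucc) (p i.succ)) →
      G.Adj (p 0) (p (Fin.last k)) →
      ∀ i j : Fin (k + 1), i < j → fo G w v (p i) (p j) := by
  classical
  intro k p hch hadj i j hij
  rcases Nat.eq_zero_or_pos k with rfl | hk
  · exact absurd (Fin.lt_def.1 hij) (by omega)
  set q0 : ℕ → V := fun l => p ⟨l % (k + 1), Nat.mod_lt _ k.succ_pos⟩ with hq0
  have hmk : ∀ (l : ℕ) (hl : l < k + 1), q0 l = p ⟨l, hl⟩ := by
    intro l hl
    simp only [hq0]
    congr 1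
    exact Fin.ext (Nat.mod_eq_of_lt hl)
  have hch0 : ∀ l, l < k → fo G w v (q0 l) (q0 (l + 1)) := by
    intro l hl
    rw [hmk l (by omega), hmk (l + 1) (by omega)]
    exact hch ⟨l, hl⟩
  have hadj0 : G.Adj (q0 0) (q0 k) := by
    rw [hmk 0 (by omega), hmk k (by omega)]
    have e0 : (⟨0, by omega⟩ : Fin (k + 1)) = 0 := rfl
    have e1 : (⟨k, by omega⟩ : Fin (k + 1)) = Fin.last k := rfl
    rw [e0, e1]
    exact hadj
  have hforward : ∀ l, l < k → ¬ SS G w v (q0 l) → ¬ SS G w v (q0 (l + 1)) :=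
    fun l hl h hS => h (fo_back (hch0 l hl) hS)
  by_cases hallS : ∀ l, l ≤ k → SS G w v (q0 l)
  · -- all vertices reachable: the path is a `wo`-path
    have hallS' : ∀ i : Fin (k + 1), SS G w v (p i) := by
      intro i
      have := hallS i.val (by omega)
      rwa [hmk i.val i.isLt, Fin.eta] at this
    have hch' : ∀ i : Fin k, wo G w (p i.castSucc) (p i.succ) :=
      fun i => fo_wo (hch i) (iff_of_true (hallS' i.castSucc) (hallS' i.succ))
    exact Or.inl ⟨iff_of_true (hallS' i) (hallS' j),
      (wo_semiTrans hrep).2.2 k p hch' hadj i j hij⟩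
  · push_neg at hallS
    obtain ⟨l0, hl0k, hl0⟩ := hallS
    by_cases hnone : ∀ l, l ≤ k → ¬ SS G w v (q0 l)
    · -- no vertex reachable
      have hnone' : ∀ i : Fin (k + 1), ¬ SS G w v (p i) := by
        intro i
        have := hnone i.val (by omega)
        rwa [hmk i.val i.isLt, Fin.eta] at this
      have hch' : ∀ i : Fin k, wo G w (p i.castSucc) (p i.succ) :=
        fun i => fo_wo (hch i) (iff_of_false (hnone' i.castSucc) (hnone' i.succ))
      exact Or.inl ⟨iff_of_false (hnone' i) (hnone' j),
        (wo_semiTrans hrep).2.2 k p hch' hadj i j hij⟩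
    · push_neg at hnone
      obtain ⟨l1, hl1k, hl1⟩ := hnone
      -- mixed case
      have hexm : ∃ l, ¬ SS G w v (q0 l) := ⟨l0, hl0⟩
      set m := Nat.find hexm with hm
      have hmnot : ¬ SS G w v (q0 m) := Nat.find_spec hexm
      have hS_lt : ∀ l, l < m → SS G w v (q0 l) :=
        fun l hl => not_not.1 (Nat.find_min hexm hl)
      have hm_le : m ≤ k := le_trans (Nat.find_min' hexm hl0) hl0k
      have hnotS_ge' : ∀ d, m + d ≤ k → ¬ SS G w v (q0 (m + d)) := by
        intro d
        induction d with
        | zero => intro _; exact hmnot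
        | succ n ih =>
          intro h
          have e : m + (n + 1) = (m + n) + 1 := by omega
          rw [e]
          exact hforward (m + n) (by omega) (ih (by omega))
      have hnotS_ge : ∀ l, m ≤ l → l ≤ k → ¬ SS G w v (q0 l) := by
        intro l h1 h2
        have := hnotS_ge' (l - m) (by omega)
        have e : m + (l - m) = l := by omega
        rwa [e] at this
      have hm_pos : 0 < m := by
        rcases Nat.eq_zero_or_pos m with h0 | h
        · exact absurd hl1 (hnotS_ge l1 (by omega) hl1k)
        · exact h
      set q : ℕ → V := fun l => q0 ((l + m) % (k + 1)) with hq
      have hchq : ∀ l, l < k → wo G w (q l) (q (l + 1)) := by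
        intro l hl
        rcases lt_trichotomy (l + m) k with hc | hc | hc
        · have e1 : (l + m) % (k + 1) = l + m := Nat.mod_eq_of_lt (by omega)
          have e2 : (l + 1 + m) % (k + 1) = l + m + 1 := by
            have : l + 1 + m = l + m + 1 := by omega
            rw [this]; exact Nat.mod_eq_of_lt (by omega)
          simp only [hq]
          rw [e1, e2]
          exact fo_wo (hch0 (l + m) (by omega))
            (iff_of_false (hnotS_ge (l + m) (by omega) (by omega))
              (hnotS_ge (l + m + 1) (by omega) (by omega)))
        · have e1 : (l + m) % (k + 1) = k := by rw [hc]; exact Nat.mod_eq_of_lt (by omega)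
          have e2 : (l + 1 + m) % (k + 1) = 0 := by
            have : l + 1 + m = k + 1 := by omega
            rw [this]; simp
          simp only [hq]
          rw [e1, e2]
          exact cross hrep (hS_lt 0 hm_pos) (hnotS_ge k hm_le (le_refl _)) hadj0
        · have e1 : (l + m) % (k + 1) = l + m - (k + 1) := by
            rw [Nat.mod_eq_sub_mod (by omega)]
            exact Nat.mod_eq_of_lt (by omega)
          have e2 : (l + 1 + m) % (k + 1) = l + m - (k + 1) + 1 := by
            rw [Nat.mod_eq_sub_mod (by omega)]
            have : l + 1 + m - (k + 1) = l + m - (k + 1) + 1 := by omega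
            rw [this]; exact Nat.mod_eq_of_lt (by omega)
          simp only [hq]
          rw [e1, e2]
          exact fo_wo (hch0 (l + m - (k + 1)) (by omega))
            (iff_of_true (hS_lt _ (by omega)) (hS_lt _ (by omega)))
      have hendq : G.Adj (q 0) (q k) := by
        have e1 : (0 + m) % (k + 1) = m := by
          have : 0 + m = m := by omega
          rw [this]; exact Nat.mod_eq_of_lt (by omega)
        have e2 : (k + m) % (k + 1) = m - 1 := by
          rw [Nat.mod_eq_sub_mod (by omega)]
          have : k + m - (k + 1) = m - 1 := by omega
          rw [this]; exact Nat.mod_eq_of_lt (by omega)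
        simp only [hq]
        rw [e1, e2]
        have hedge := fo_adj hrep (hch0 (m - 1) (by omega))
        have e3 : m - 1 + 1 = m := by omega
        rw [e3] at hedge
        exact hedge.symm
      have hstar := star hrep q k hk hchq hendq
      -- translate back
      have hqval : ∀ a, a ≤ k → ∀ b, b ≤ k → (a + m) % (k + 1) = b → q a = q0 b := by
        intro a _ b _ e
        simp only [hq, e]
      have key : ∀ I J : ℕ, I < J → J ≤ k → fo G w v (q0 I) (q0 J) := by
        intro I J hIJ hJk
        by_cases hJm : J < m
        · have e1 : (I + (k + 1) - m + m) % (k + 1) = I := by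
            have : I + (k + 1) - m + m = I + (k + 1) := by omega
            rw [this, Nat.mod_eq_sub_mod (by omega)]
            have : I + (k + 1) - (k + 1) = I := by omega
            rw [this]; exact Nat.mod_eq_of_lt (by omega)
          have e2 : (J + (k + 1) - m + m) % (k + 1) = J := by
            have : J + (k + 1) - m + m = J + (k + 1) := by omega
            rw [this, Nat.mod_eq_sub_mod (by omega)]
            have : J + (k + 1) - (k + 1) = J := by omega
            rw [this]; exact Nat.mod_eq_of_lt (by omega)
          have := hstar (I + (k + 1) - m) (J + (k + 1) - m) (by omega) (by omega)
          rw [hqval _ (by omega) I (by omega) e1, hqval _ (by omega) J (by omega) e2] at this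
          exact Or.inl ⟨iff_of_true (hS_lt I (by omega)) (hS_lt J hJm), this⟩
        · by_cases hIm : m ≤ I
          · have e1 : (I - m + m) % (k + 1) = I := by
              have : I - m + m = I := by omega
              rw [this]; exact Nat.mod_eq_of_lt (by omega)
            have e2 : (J - m + m) % (k + 1) = J := by
              have : J - m + m = J := by omega
              rw [this]; exact Nat.mod_eq_of_lt (by omega)
            have := hstar (I - m) (J - m) (by omega) (by omega)
            rw [hqval _ (by omega) I (by omega) e1, hqval _ (by omega) J (by omega) e2] at this
            exact Or.inl ⟨iff_of_false (hnotS_ge I (by omega) (by omega))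
              (hnotS_ge J (by omega) hJk), this⟩
          · -- I < m ≤ J
            have e1 : (J - m + m) % (k + 1) = J := by
              have : J - m + m = J := by omega
              rw [this]; exact Nat.mod_eq_of_lt (by omega)
            have e2 : (I + (k + 1) - m + m) % (k + 1) = I := by
              have : I + (k + 1) - m + m = I + (k + 1) := by omega
              rw [this, Nat.mod_eq_sub_mod (by omega)]
              have : I + (k + 1) - (k + 1) = I := by omega
              rw [this]; exact Nat.mod_eq_of_lt (by omega)
            have := hstar (J - m) (I + (k + 1) - m) (by omega) (by omega)
            rw [hqval _ (by omega) J (by omega) e1, hqval _ (by omega) I (by omega) e2] at this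
            exact Or.inr ⟨hS_lt I (by omega), hnotS_ge J (by omega) hJk, this.1.symm⟩
      have := key i.val j.val (Fin.lt_def.1 hij) (by omega)
      rwa [hmk i.val i.isLt, hmk j.val j.isLt, Fin.eta, Fin.eta] at this

end Flip

end Aux

/-- Every word-representable graph has a semi-transitive orientation in which any
prescribed vertex `v` is a source. -/
theorem exists_semiTransitive_source [Fintype V] [DecidableEq V] (G : SimpleGraph V)
    (h : WordRepresentable G) (v : V) :
    ∃ o : V → V → Prop, SemiTransitive G o ∧ ∀ u : V, G.Adj v u → o v u := by
  classical
  obtain ⟨w, hrep⟩ := h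
  refine ⟨fo G w v, ⟨fo_orient hrep, fo_acyclic hrep, fo_semi hrep⟩, ?_⟩
  intro u hu
  have hSv : SS G w v v := Or.inl rfl
  by_cases hSu : SS G w v u
  · refine Or.inl ⟨iff_of_true hSv hSu, ?_⟩
    rcases adj_or hrep hu with h' | h'
    · exact h'
    · exfalso
      rcases hSu with rfl | hTu
      · exact hu.ne rfl
      · exact wo_acyclic hrep v (hTu.tail h')
  · exact Or.inr ⟨hSv, hSu, hu⟩

end WordRepr
end

section
/- Consider the graph G on vertex set {1,…,7} with edge set {{1,2},{1,4},{1,6},{2,3},{2,6},{2,7},{3,4},{3,5},{3,6},{3,7},{4,5},{5,6}} (Graph 12′). The orientation of G given by 1→2, 1→4, 1→6, 2→7, 2→6, 3→7, 3→2, 3→5, 3→6, 3→4, 5→6, 5→4 is semi-transitive; consequently G is word-representable. -/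
namespace WordRepr

variable {V : Type*}

/-- Graph 12′ on the vertices `{1,…,7}` (vertex `i` is encoded as `i - 1 : Fin 7`). -/
def graph12' : SimpleGraph (Fin 7) :=
  SimpleGraph.fromRel fun x y =>
    ((x : ℕ) + 1, (y : ℕ) + 1) ∈
      [(1, 2), (1, 4), (1, 6), (2, 3), (2, 6), (2, 7), (3, 4), (3, 5), (3, 6), (3, 7),
        (4, 5), (5, 6)]

/-- The orientation `1→2, 1→4, 1→6, 2→7, 2→6, 3→7, 3→2, 3→5, 3→6, 3→4, 5→6, 5→4`. -/
def orient12' (x y : Fin 7) : Prop :=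
  ((x : ℕ) + 1, (y : ℕ) + 1) ∈
    [(1, 2), (1, 4), (1, 6), (2, 7), (2, 6), (3, 7), (3, 2), (3, 5), (3, 6), (3, 4),
      (5, 6), (5, 4)]


instance : DecidableRel orient12' := fun x y =>
  inferInstanceAs (Decidable (((x : ℕ) + 1, (y : ℕ) + 1) ∈
    [(1, 2), (1, 4), (1, 6), (2, 7), (2, 6), (3, 7), (3, 2), (3, 5), (3, 6), (3, 4),
      (5, 6), (5, 4)]))

instance : DecidableRel graph12'.Adj := fun x y =>
  inferInstanceAs (Decidable (x ≠ y ∧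
    ((((x : ℕ) + 1, (y : ℕ) + 1) ∈
      [(1, 2), (1, 4), (1, 6), (2, 3), (2, 6), (2, 7), (3, 4), (3, 5), (3, 6), (3, 7),
        (4, 5), (5, 6)]) ∨
     (((y : ℕ) + 1, (x : ℕ) + 1) ∈
      [(1, 2), (1, 4), (1, 6), (2, 3), (2, 6), (2, 7), (3, 4), (3, 5), (3, 6), (3, 7),
        (4, 5), (5, 6)]))))

/-- rank function witnessing acyclicity -/
def rk : Fin 7 → ℕ
  | 0 => 1 | 1 => 3 | 2 => 0 | 3 => 4 | 4 => 2 | 5 => 5 | 6 => 6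

lemma rank_lt : ∀ x y : Fin 7, orient12' x y → rk x < rk y := by decide

set_option maxRecDepth 4000

def chainNeB [DecidableEq V] : List V → Bool
  | [] => true
  | [_] => true
  | a :: b :: l => decide (a ≠ b) && chainNeB (b :: l)

lemma chainNeB_iff [DecidableEq V] : ∀ l : List V, chainNeB l = true ↔ List.Chain' (· ≠ ·) l
  | [] => by simp [chainNeB, List.Chain', List.isChain_nil]
  | [_] => by simp [chainNeB, List.Chain', List.isChain_singleton]
  | a :: b :: l => by
    simp [chainNeB, Bool.and_eq_true, chainNeB_iff (b :: l), List.Chain', List.isChain_cons_cons]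

instance [DecidableEq V] (w : List V) (x y : V) : Decidable (Alternates w x y) :=
  decidable_of_iff _ (chainNeB_iff (w.filter fun z => decide (z = x ∨ z = y)))

lemma no_path3 : ∀ a b c d : Fin 7,
    orient12' a b → orient12' b c → ¬ orient12' c d := by decide

/-- The given orientation of Graph 12′ is semi-transitive; consequently Graph 12′ is
word-representable. -/
theorem graph12'_semiTransitive_and_wordRepresentable :
    SemiTransitive graph12' orient12' ∧ WordRepresentable graph12' := by
  refine ⟨⟨⟨?_, ?_⟩, ?_, ?_⟩, ?_⟩
  · decide
  · decide
  · intro v h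
    have key : ∀ a b : Fin 7, Relation.TransGen orient12' a b → rk a < rk b := by
      intro a b h
      induction h with
      | single h => exact rank_lt _ _ h
      | tail _ h ih => exact lt_trans ih (rank_lt _ _ h)
    exact lt_irrefl _ (key v v h)
  · intro k p hchain hadj i j hij
    match k, p, hchain, hadj, i, j, hij with
    | 0, p, hchain, hadj, i, j, hij => exact absurd hij (by omega)
    | 1, p, hchain, hadj, i, j, hij =>
      have : (∀ q : Fin 2 → Fin 7, (∀ i : Fin 1, orient12' (q i.castSucc) (q i.succ)) →
          graph12'.Adj (q 0) (q (Fin.last 1)) →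
          ∀ i j : Fin 2, i < j → orient12' (q i) (q j)) := by decide
      exact this p hchain hadj i j hij
    | 2, p, hchain, hadj, i, j, hij =>
      have : (∀ q : Fin 3 → Fin 7, (∀ i : Fin 2, orient12' (q i.castSucc) (q i.succ)) →
          graph12'.Adj (q 0) (q (Fin.last 2)) →
          ∀ i j : Fin 3, i < j → orient12' (q i) (q j)) := by decide
      exact this p hchain hadj i j hij
    | (n+3), p, hchain, hadj, i, j, hij =>
      have h0 := hchain ⟨0, by omega⟩
      have h1 := hchain ⟨1, by omega⟩
      have h2 := hchain ⟨2, by omega⟩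
      exact absurd h2 (no_path3 _ _ _ _ h0 h1)
  · exact ⟨[0,3,1,5,0,6,2,1,6,4,5,3,2,4], by decide, by decide⟩

end WordRepr
end
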